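/- Let g be a standard Gaussian random variable and r ∈ ℝ. Then E[sign(g·r)·g] = sign(r)·√(2/π) when r ≠ 0; more generally, for a standard Gaussian vector s ∈ ℝ^D and fixed vectors r, y ∈ ℝ^D with r ≠ 0, E[ sign(⟨s, r⟩)·⟨s, y⟩ ] = √(2/π)·⟨r, y⟩/‖r‖. -/

import Mathlib

open MeasureTheory ProbabilityTheory

/-- sign(t) = +1 if t ≥ 0, −1 otherwise. -/
noncomputable def qSign (t : ℝ) : ℝ := if 0 ≤ t then 1 else -1

section Aux

open Real Set Filter
open scoped NNReal ENNReal

lemma qSign_measurable : Measurable qSign := by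
  unfold qSign
  exact Measurable.ite (measurableSet_le measurable_const measurable_id)
    measurable_const measurable_const

lemma qSign_abs (t : ℝ) : |qSign t| = 1 := by
  unfold qSign; split <;> simp

lemma pdf01 (x : ℝ) : gaussianPDFReal 0 1 x = (Real.sqrt (2*π))⁻¹ * Real.exp (-x^2/2) := by
  simp [gaussianPDFReal]

lemma integral_gaussianReal_eq (g : ℝ → ℝ) :
    ∫ x, g x ∂(gaussianReal 0 1) = ∫ x, gaussianPDFReal 0 1 x * g x := by
  rw [gaussianReal_of_var_ne_zero _ one_ne_zero]
  have h1 : (gaussianPDF 0 1) = fun x => ((Real.toNNReal (gaussianPDFReal 0 1 x) : ℝ≥0) : ℝ≥0∞) := by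
    ext x; simp [gaussianPDF, ENNReal.ofReal]
  rw [h1, integral_withDensity_eq_integral_smul
    ((measurable_gaussianPDFReal 0 1).real_toNNReal) g]
  congr 1 with x
  simp [NNReal.smul_def, Real.coe_toNNReal _ (gaussianPDFReal_nonneg 0 1 x)]

lemma integrable_xexp : Integrable (fun x : ℝ => x * Real.exp (-x^2/2)) := by
  have := integrable_mul_exp_neg_mul_sq (b := (1/2 : ℝ)) (by norm_num)
  convert this using 2 with x
  ring_nf

lemma integral_xexp_total : ∫ x : ℝ, x * Real.exp (-x^2/2) = 0 := by
  have h := integral_neg_eq_self (fun x : ℝ => x * Real.exp (-x^2/2)) volume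
  have h2 : ∫ x : ℝ, -(x * Real.exp (-x^2/2)) = ∫ x : ℝ, x * Real.exp (-x^2/2) := by
    rw [← h]
    congr 1 with x
    ring_nf
  rw [integral_neg] at h2
  linarith

lemma integral_xexp_Ioi (c : ℝ) :
    ∫ x in Ioi c, x * Real.exp (-x^2/2) = Real.exp (-c^2/2) := by
  have hderiv : ∀ x ∈ Ioi c, HasDerivAt (fun y : ℝ => -Real.exp (-y^2/2))
      (x * Real.exp (-x^2/2)) x := by
    intro x _
    have h1 : HasDerivAt (fun y : ℝ => -y^2/2) (-x) x := by
      have := ((hasDerivAt_pow 2 x).neg.div_const 2)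
      refine this.congr_deriv ?_
      simp; ring
    have := (h1.exp).neg
    refine this.congr_deriv ?_
    ring
  have hint : IntegrableOn (fun x : ℝ => x * Real.exp (-x^2/2)) (Ioi c) :=
    integrable_xexp.integrableOn
  have hcont : ContinuousWithinAt (fun y : ℝ => -Real.exp (-y^2/2)) (Ici c) c :=
    Continuous.continuousWithinAt (by fun_prop)
  have htend : Tendsto (fun y : ℝ => -Real.exp (-y^2/2)) atTop (nhds 0) := by
    rw [← neg_zero]
    refine (Real.tendsto_exp_atBot.comp ?_).neg
    apply Filter.Tendsto.atBot_div_const (by norm_num)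
    exact tendsto_neg_atBot_iff.mpr (tendsto_pow_atTop (by norm_num))
  have := integral_Ioi_of_hasDerivAt_of_tendsto hcont hderiv hint htend
  rw [this]; ring

lemma integral_xexp_Iic (c : ℝ) :
    ∫ x in Iic c, x * Real.exp (-x^2/2) = -Real.exp (-c^2/2) := by
  have h := intervalIntegral.integral_Iic_add_Ioi (b := c) (μ := volume)
    (f := fun x : ℝ => x * Real.exp (-x^2/2))
    integrable_xexp.integrableOn integrable_xexp.integrableOn
  rw [integral_xexp_total, integral_xexp_Ioi] at h
  linarith

lemma sqrt_two_div_pi : Real.sqrt (2/π) = 2 * (Real.sqrt (2*π))⁻¹ := by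
  rw [show (2:ℝ)/π = 4 / (2*π) by ring, show (4:ℝ) = 2^2 by norm_num]
  rw [Real.sqrt_div' _ (by positivity), Real.sqrt_sq (by norm_num)]
  ring


lemma complete_square (τ u a : ℝ) (hτ : 0 < τ) :
    ∫ x : ℝ, Real.exp (-(x*u+a)^2/(2*τ)) * Real.exp (-x^2/2)
      = Real.sqrt (2*π) * (Real.sqrt (τ/(τ+u^2)) * Real.exp (-a^2/(2*(τ+u^2)))) := by
  have hu : 0 < τ + u^2 := by positivity
  set β := (u^2+τ)/(2*τ) with hβ
  have hβpos : 0 < β := by positivity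
  set m := u*a/(u^2+τ) with hm
  have key : ∀ x : ℝ, Real.exp (-(x*u+a)^2/(2*τ)) * Real.exp (-x^2/2)
      = Real.exp (-β*(x+m)^2) * Real.exp (-a^2/(2*(τ+u^2))) := by
    intro x
    rw [← Real.exp_add, ← Real.exp_add]
    congr 1
    have hτ' : τ ≠ 0 := hτ.ne'
    have huτ : u^2+τ ≠ 0 := by positivity
    have huτ' : τ+u^2 ≠ 0 := hu.ne'
    rw [hβ, hm]
    field_simp
    ring
  simp_rw [key]
  rw [MeasureTheory.integral_mul_const]
  have h2 : ∫ x : ℝ, Real.exp (-β*(x+m)^2) = ∫ x : ℝ, Real.exp (-β*x^2) :=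
    integral_add_right_eq_self (fun x => Real.exp (-β*x^2)) m
  rw [h2, integral_gaussian]
  rw [show π/β = (2*π) * (τ/(τ+u^2)) by rw [hβ]; field_simp [hτ.ne']; ring]
  rw [Real.sqrt_mul (by positivity)]
  ring

lemma gauss_exp_integral (τ u a : ℝ) (hτ : 0 < τ) :
    ∫ x, Real.exp (-(x*u+a)^2/(2*τ)) ∂(gaussianReal 0 1)
      = Real.sqrt (τ/(τ+u^2)) * Real.exp (-a^2/(2*(τ+u^2))) := by
  rw [integral_gaussianReal_eq]
  have h : ∀ x : ℝ, gaussianPDFReal 0 1 x * Real.exp (-(x*u+a)^2/(2*τ))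
      = (Real.sqrt (2*π))⁻¹ * (Real.exp (-(x*u+a)^2/(2*τ)) * Real.exp (-x^2/2)) := by
    intro x; rw [pdf01]; ring
  simp_rw [h]
  rw [MeasureTheory.integral_const_mul, complete_square τ u a hτ, ← mul_assoc,
    inv_mul_cancel₀ (by positivity), one_mul]

lemma qsign_x_gauss (b a : ℝ) (hb : b ≠ 0) :
    ∫ x, qSign (x*b+a) * x ∂(gaussianReal 0 1)
      = qSign b * (Real.sqrt (2/π) * Real.exp (-a^2/(2*b^2))) := by
  rw [integral_gaussianReal_eq]
  set c := -a/b with hc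
  have hcsq : -c^2/2 = -a^2/(2*b^2) := by
    rw [hc, div_pow, neg_sq, neg_div, neg_div, div_div, mul_comm (b^2) 2]
  have hcb : c * b = -a := by rw [hc]; field_simp
  have hmeas : Measurable fun x : ℝ => gaussianPDFReal 0 1 x * (qSign (x*b+a) * x) :=
    (measurable_gaussianPDFReal 0 1).mul
      ((qSign_measurable.comp (by fun_prop)).mul measurable_id)
  have hint : Integrable (fun x => gaussianPDFReal 0 1 x * (qSign (x*b+a) * x)) := by
    refine (integrable_xexp.abs.const_mul ((Real.sqrt (2*π))⁻¹)).mono'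
      hmeas.aestronglyMeasurable (ae_of_all _ fun x => ?_)
    have heq : |gaussianPDFReal 0 1 x * (qSign (x*b+a) * x)|
        = (Real.sqrt (2*π))⁻¹ * |x * Real.exp (-x^2/2)| := by
      rw [pdf01]
      simp only [abs_mul, qSign_abs]
      rw [abs_of_nonneg (by positivity : (0:ℝ) ≤ (Real.sqrt (2*π))⁻¹),
        abs_of_nonneg (Real.exp_nonneg (-x^2/2))]
      ring
    rw [Real.norm_eq_abs, heq]
  rw [← intervalIntegral.integral_Iic_add_Ioi hint.integrableOn hint.integrableOn]
  have hIoi_pos : ∫ x in Set.Ioi c, gaussianPDFReal 0 1 x * x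
      = (Real.sqrt (2*π))⁻¹ * Real.exp (-c^2/2) := by
    simp_rw [pdf01, mul_assoc]
    rw [MeasureTheory.integral_const_mul]
    congr 1
    simp_rw [mul_comm (Real.exp _)]
    exact integral_xexp_Ioi c
  have hIic_pos : ∫ x in Set.Iic c, gaussianPDFReal 0 1 x * x
      = (Real.sqrt (2*π))⁻¹ * (-Real.exp (-c^2/2)) := by
    simp_rw [pdf01, mul_assoc]
    rw [MeasureTheory.integral_const_mul]
    congr 1
    simp_rw [mul_comm (Real.exp _)]
    exact integral_xexp_Iic c
  have hae_ne : ∀ᵐ x : ℝ, x ≠ c := by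
    rw [ae_iff]
    simp only [ne_eq, not_not]
    have : {x : ℝ | x = c} = {c} := by ext x; simp
    rw [this]
    exact Real.volume_singleton
  rcases hb.lt_or_gt with hbneg | hbpos
  · -- b < 0
    have hq : qSign b = -1 := by unfold qSign; rw [if_neg (not_le.2 hbneg)]
    have h1 : ∫ x in Set.Iic c, gaussianPDFReal 0 1 x * (qSign (x*b+a) * x)
        = ∫ x in Set.Iic c, gaussianPDFReal 0 1 x * x := by
      refine setIntegral_congr_fun measurableSet_Iic fun x hx => ?_
      have hxc : x ≤ c := hx
      have : 0 ≤ x*b+a := by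
        have h3 : c*b ≤ x*b := mul_le_mul_of_nonpos_right hxc hbneg.le
        rw [hcb] at h3
        linarith
      unfold qSign
      rw [if_pos this, one_mul]
    have h2 : ∫ x in Set.Ioi c, gaussianPDFReal 0 1 x * (qSign (x*b+a) * x)
        = ∫ x in Set.Ioi c, gaussianPDFReal 0 1 x * (-x) := by
      refine setIntegral_congr_fun measurableSet_Ioi fun x hx => ?_
      have hxc : c < x := hx
      have : x*b+a < 0 := by
        have h3 : x*b < c*b := mul_lt_mul_of_neg_right hxc hbneg
        rw [hcb] at h3
        linarith
      unfold qSign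
      rw [if_neg (not_le.2 this)]
      ring_nf
    rw [h1, h2]
    simp_rw [mul_neg]
    rw [MeasureTheory.integral_neg, hIic_pos, hIoi_pos, hq, hcsq, sqrt_two_div_pi]
    ring
  · -- b > 0
    have hq : qSign b = 1 := by unfold qSign; rw [if_pos hbpos.le]
    have h1 : ∫ x in Set.Iic c, gaussianPDFReal 0 1 x * (qSign (x*b+a) * x)
        = ∫ x in Set.Iic c, gaussianPDFReal 0 1 x * (-x) := by
      refine setIntegral_congr_ae measurableSet_Iic ?_
      filter_upwards [hae_ne] with x hxne hx
      have hxc : x < c := lt_of_le_of_ne hx hxne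
      have : x*b+a < 0 := by
        have h3 : x*b < c*b := mul_lt_mul_of_pos_right hxc hbpos
        rw [hcb] at h3
        linarith
      unfold qSign
      rw [if_neg (not_le.2 this)]
      ring_nf
    have h2 : ∫ x in Set.Ioi c, gaussianPDFReal 0 1 x * (qSign (x*b+a) * x)
        = ∫ x in Set.Ioi c, gaussianPDFReal 0 1 x * x := by
      refine setIntegral_congr_fun measurableSet_Ioi fun x hx => ?_
      have hxc : c < x := hx
      have : 0 ≤ x*b+a := by
        have h3 : c*b < x*b := mul_lt_mul_of_pos_right hxc hbpos
        rw [hcb] at h3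
        linarith
      unfold qSign
      rw [if_pos this, one_mul]
    rw [h1, h2]
    simp_rw [mul_neg]
    rw [MeasureTheory.integral_neg, hIic_pos, hIoi_pos, hq, hcsq, sqrt_two_div_pi]
    ring


lemma pi_exp_integral (n : ℕ) :
    ∀ (r : Fin n → ℝ) (a τ : ℝ), 0 < τ →
    ∫ s : Fin n → ℝ, Real.exp (-(∑ i, s i * r i + a)^2/(2*τ))
        ∂(Measure.pi fun _ : Fin n => gaussianReal 0 1)
      = Real.sqrt (τ/(τ + ∑ i, r i^2)) * Real.exp (-a^2/(2*(τ + ∑ i, r i^2))) := by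
  induction n with
  | zero =>
    intro r a τ hτ
    simp only [Finset.univ_eq_empty, Finset.sum_empty, zero_add, add_zero]
    rw [MeasureTheory.integral_const]
    simp [div_self hτ.ne']
  | succ n ih =>
    intro r a τ hτ
    have mp := measurePreserving_piFinSuccAbove (fun _ : Fin (n+1) => gaussianReal 0 1) 0
    set e := MeasurableEquiv.piFinSuccAbove (fun _ : Fin (n+1) => ℝ) 0 with he
    set σ : ℝ := ∑ i : Fin n, (r i.succ)^2 with hσ
    have hσnn : 0 ≤ σ := Finset.sum_nonneg fun i _ => sq_nonneg _
    set g : ℝ × (Fin n → ℝ) → ℝ := fun z =>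
      Real.exp (-(z.1 * r 0 + (∑ i, z.2 i * r i.succ) + a)^2/(2*τ)) with hg
    have hge : ∀ s : Fin (n+1) → ℝ,
        g (e s) = Real.exp (-(∑ i, s i * r i + a)^2/(2*τ)) := by
      intro s
      have hes : e s = (s 0, fun i => s i.succ) := rfl
      rw [hes]
      simp only [hg]
      rw [Fin.sum_univ_succ]
    have hmg : Measurable g := by
      have hA : Measurable fun z : ℝ × (Fin n → ℝ) => ∑ i, z.2 i * r i.succ :=
        Finset.measurable_sum _ fun i _ => ((measurable_pi_apply i).comp measurable_snd).mul_const _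
      exact (((((measurable_fst.mul_const (r 0)).add hA).add_const a).pow_const
        2).neg.div_const (2*τ)).exp
    have hgint : Integrable g
        ((gaussianReal 0 1).prod (Measure.pi fun _ : Fin n => gaussianReal 0 1)) := by
      refine (integrable_const (1:ℝ)).mono' hmg.aestronglyMeasurable (ae_of_all _ fun z => ?_)
      rw [Real.norm_eq_abs, abs_of_pos (Real.exp_pos _)]
      apply Real.exp_le_one_iff.2
      apply div_nonpos_of_nonpos_of_nonneg (neg_nonpos.2 (sq_nonneg _)) (by positivity)
    calc ∫ s : Fin (n+1) → ℝ, Real.exp (-(∑ i, s i * r i + a)^2/(2*τ))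
          ∂(Measure.pi fun _ : Fin (n+1) => gaussianReal 0 1)
        = ∫ s : Fin (n+1) → ℝ, g (e s)
          ∂(Measure.pi fun _ : Fin (n+1) => gaussianReal 0 1) := by
          congr 1 with s; rw [hge]
      _ = ∫ z, g z ∂((gaussianReal 0 1).prod
            (Measure.pi fun _ : Fin n => gaussianReal 0 1)) :=
          mp.integral_comp e.measurableEmbedding g
      _ = ∫ x, (∫ s' : Fin n → ℝ, g (x, s')
            ∂(Measure.pi fun _ : Fin n => gaussianReal 0 1)) ∂(gaussianReal 0 1) :=
          MeasureTheory.integral_prod g hgint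
      _ = ∫ x, Real.sqrt (τ/(τ + σ)) * Real.exp (-(x * r 0 + a)^2/(2*(τ + σ)))
            ∂(gaussianReal 0 1) := by
          congr 1 with x
          have hfun : ∀ s' : Fin n → ℝ, g (x, s')
              = Real.exp (-(∑ i, s' i * r i.succ + (x * r 0 + a))^2/(2*τ)) := by
            intro s'; simp only [hg]; congr 2; ring
          simp_rw [hfun]
          rw [ih (fun i => r i.succ) (x * r 0 + a) τ hτ]
      _ = Real.sqrt (τ/(τ + σ)) * (Real.sqrt ((τ+σ)/((τ+σ) + (r 0)^2))
            * Real.exp (-a^2/(2*((τ+σ) + (r 0)^2)))) := by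
          rw [MeasureTheory.integral_const_mul,
            gauss_exp_integral (τ+σ) (r 0) a (by positivity)]
      _ = Real.sqrt (τ/(τ + ∑ i, r i^2)) * Real.exp (-a^2/(2*(τ + ∑ i, r i^2))) := by
          rw [Fin.sum_univ_succ, ← mul_assoc, ← Real.sqrt_mul (by positivity)]
          have h1 : τ/(τ+σ) * ((τ+σ)/((τ+σ) + (r 0)^2)) = τ/(τ + ((r 0)^2 + σ)) := by
            have h2 : τ + σ ≠ 0 := by positivity
            rw [div_mul_div_comm, mul_comm τ (τ+σ), mul_div_mul_left _ _ h2]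
            congr 1
            ring
          rw [h1]
          congr 3 <;> ring


lemma qSign_mul_abs (t : ℝ) : qSign t * |t| = t := by
  unfold qSign
  split_ifs with h
  · rw [abs_of_nonneg h, one_mul]
  · rw [abs_of_neg (not_le.1 h)]; ring

lemma integrable_id_gauss : Integrable (fun x : ℝ => x) (gaussianReal 0 1) := by
  rw [gaussianReal_of_var_ne_zero _ one_ne_zero,
    integrable_withDensity_iff (measurable_gaussianPDF 0 1)
      (ae_of_all _ fun x => ENNReal.ofReal_lt_top)]
  have h : ∀ x : ℝ, x * (gaussianPDF 0 1 x).toReal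
      = (Real.sqrt (2*π))⁻¹ * (x * Real.exp (-x^2/2)) := by
    intro x
    rw [gaussianPDF, ENNReal.toReal_ofReal (gaussianPDFReal_nonneg 0 1 x), pdf01]
    ring
  simp_rw [h]
  exact integrable_xexp.const_mul _

lemma integral_id_gauss : ∫ x, x ∂(gaussianReal 0 1) = 0 := by
  rw [integral_gaussianReal_eq]
  have h : ∀ x : ℝ, gaussianPDFReal 0 1 x * x
      = (Real.sqrt (2*π))⁻¹ * (x * Real.exp (-x^2/2)) := by
    intro x; rw [pdf01]; ring
  simp_rw [h]
  rw [MeasureTheory.integral_const_mul, integral_xexp_total, mul_zero]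

lemma qsign_coord_integrable (n : ℕ) (r : Fin (n+1) → ℝ) (j : Fin (n+1)) :
    Integrable (fun s : Fin (n+1) → ℝ => qSign (∑ i, s i * r i) * s j)
      (Measure.pi fun _ : Fin (n+1) => gaussianReal 0 1) ∧
    (∫ s : Fin (n+1) → ℝ, qSign (∑ i, s i * r i) * s j
        ∂(Measure.pi fun _ : Fin (n+1) => gaussianReal 0 1))
      = Real.sqrt (2/π) * r j / Real.sqrt (∑ i, r i^2) := by
  have mp := measurePreserving_piFinSuccAbove (fun _ : Fin (n+1) => gaussianReal 0 1) j
  set e := MeasurableEquiv.piFinSuccAbove (fun _ : Fin (n+1) => ℝ) j with he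
  set g : ℝ × (Fin n → ℝ) → ℝ := fun z =>
    qSign (z.1 * r j + ∑ i, z.2 i * r (j.succAbove i)) * z.1 with hg
  have hge : ∀ s : Fin (n+1) → ℝ, g (e s) = qSign (∑ i, s i * r i) * s j := by
    intro s
    have hes : e s = (s j, fun i => s (j.succAbove i)) := rfl
    rw [hes]
    simp only [hg]
    rw [← Fin.sum_univ_succAbove (fun i => s i * r i) j]
  have hA : Measurable fun z : ℝ × (Fin n → ℝ) => ∑ i, z.2 i * r (j.succAbove i) :=
    Finset.measurable_sum _ fun i _ =>
      ((measurable_pi_apply i).comp measurable_snd).mul_const _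
  have hmg : Measurable g :=
    (qSign_measurable.comp ((measurable_fst.mul_const (r j)).add hA)).mul measurable_fst
  have hfstint : Integrable (fun z : ℝ × (Fin n → ℝ) => z.1)
      ((gaussianReal 0 1).prod (Measure.pi fun _ : Fin n => gaussianReal 0 1)) := by
    have hmp : MeasurePreserving (Prod.fst : ℝ × (Fin n → ℝ) → ℝ)
        ((gaussianReal 0 1).prod (Measure.pi fun _ : Fin n => gaussianReal 0 1))
        (gaussianReal 0 1) :=
      ⟨measurable_fst, by rw [Measure.map_fst_prod]; simp⟩
    exact (hmp.integrable_comp aestronglyMeasurable_id).2 integrable_id_gauss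
  have hgint : Integrable g
      ((gaussianReal 0 1).prod (Measure.pi fun _ : Fin n => gaussianReal 0 1)) := by
    refine hfstint.abs.mono' hmg.aestronglyMeasurable (ae_of_all _ fun z => ?_)
    rw [Real.norm_eq_abs, abs_mul, qSign_abs, one_mul]
  have hcomp : (fun s : Fin (n+1) → ℝ => qSign (∑ i, s i * r i) * s j)
      = fun s => g (e s) := funext fun s => (hge s).symm
  constructor
  · rw [hcomp]
    exact (mp.integrable_comp_emb e.measurableEmbedding).2 hgint
  rw [hcomp]
  rw [show (∫ s : Fin (n+1) → ℝ, g (e s)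
      ∂(Measure.pi fun _ : Fin (n+1) => gaussianReal 0 1)) = ∫ z, g z
      ∂((gaussianReal 0 1).prod (Measure.pi fun _ : Fin n => gaussianReal 0 1)) from
    mp.integral_comp e.measurableEmbedding g]
  rw [MeasureTheory.integral_prod_symm g hgint]
  have hsumsq : (∑ i, r i^2) = (r j)^2 + ∑ i, (r (j.succAbove i))^2 :=
    Fin.sum_univ_succAbove (fun i => r i^2) j
  by_cases hrj : r j = 0
  · have hz : ∀ s' : Fin n → ℝ, (∫ x, g (x, s') ∂(gaussianReal 0 1)) = 0 := by
      intro s'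
      simp only [hg, hrj, mul_zero, zero_add]
      rw [MeasureTheory.integral_const_mul, integral_id_gauss, mul_zero]
    simp_rw [hz]
    rw [MeasureTheory.integral_zero, hrj]
    simp
  · have hτ : 0 < (r j)^2 := by positivity
    have hinner : ∀ s' : Fin n → ℝ, (∫ x, g (x, s') ∂(gaussianReal 0 1))
        = qSign (r j) * (Real.sqrt (2/π) *
            Real.exp (-(∑ i, s' i * r (j.succAbove i))^2/(2*(r j)^2))) := by
      intro s'
      simp only [hg]
      exact qsign_x_gauss (r j) (∑ i, s' i * r (j.succAbove i)) hrj
    simp_rw [hinner]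
    rw [MeasureTheory.integral_const_mul, MeasureTheory.integral_const_mul]
    have hKey := pi_exp_integral n (fun i => r (j.succAbove i)) 0 ((r j)^2) hτ
    simp only [add_zero, ne_eq, OfNat.ofNat_ne_zero, not_false_eq_true, zero_pow,
      neg_zero, zero_div, Real.exp_zero, mul_one] at hKey
    rw [hKey]
    set σ : ℝ := ∑ i : Fin n, (r (j.succAbove i))^2 with hσ
    have hσnn : 0 ≤ σ := Finset.sum_nonneg fun i _ => sq_nonneg _
    rw [Real.sqrt_div (sq_nonneg (r j)), Real.sqrt_sq_eq_abs, hsumsq]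
    rw [show qSign (r j) * (Real.sqrt (2/π) * (|r j| / Real.sqrt ((r j)^2 + σ)))
        = Real.sqrt (2/π) * (qSign (r j) * |r j|) / Real.sqrt ((r j)^2 + σ) by ring]
    rw [qSign_mul_abs]

end Aux

/-- Gaussian identity underlying QJL: for a standard Gaussian g,
E[sign(g·r)·g] = sign(r)·√(2/π) for r ≠ 0; for a standard Gaussian vector s,
E[sign(⟨s,r⟩)·⟨s,y⟩] = √(2/π)·⟨r,y⟩/‖r‖. -/
theorem stmt_7 (D : ℕ) (r₀ : ℝ) (hr₀ : r₀ ≠ 0)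
    (r y : Fin D → ℝ) (hr : r ≠ 0) :
    (∫ g, qSign (g * r₀) * g ∂(gaussianReal 0 1)) = qSign r₀ * Real.sqrt (2 / Real.pi) ∧
      (∫ s : Fin D → ℝ, qSign (∑ j, s j * r j) * (∑ j, s j * y j)
          ∂(Measure.pi fun _ : Fin D => gaussianReal 0 1)) =
        Real.sqrt (2 / Real.pi) * (∑ j, r j * y j) / Real.sqrt (∑ j, r j ^ 2) := by
  constructor
  · have h := qsign_x_gauss r₀ 0 hr₀
    simpa using h
  · obtain ⟨n, rfl⟩ : ∃ n, D = n + 1 := by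
      cases D with
      | zero => exact absurd (funext fun i => i.elim0) hr
      | succ n => exact ⟨n, rfl⟩
    have hsum : ∀ s : Fin (n+1) → ℝ,
        qSign (∑ i, s i * r i) * (∑ j, s j * y j)
          = ∑ j, y j * (qSign (∑ i, s i * r i) * s j) := by
      intro s
      rw [Finset.mul_sum]
      exact Finset.sum_congr rfl fun j _ => by ring
    simp_rw [hsum]
    rw [MeasureTheory.integral_finset_sum _ fun j _ =>
      ((qsign_coord_integrable n r j).1.const_mul (y j))]
    have hD : ∀ j, (∫ s : Fin (n+1) → ℝ, y j * (qSign (∑ i, s i * r i) * s j)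
        ∂(Measure.pi fun _ : Fin (n+1) => gaussianReal 0 1))
        = y j * (Real.sqrt (2/Real.pi) * r j / Real.sqrt (∑ i, r i^2)) := by
      intro j
      rw [MeasureTheory.integral_const_mul, (qsign_coord_integrable n r j).2]
    simp_rw [hD]
    rw [Finset.mul_sum, Finset.sum_div]
    exact Finset.sum_congr rfl fun j _ => by ring
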